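/- Every coloring of the edges of the complete 4-partite graph K_9^4 (four parts, each of size 9) with 4 colors contains a monochromatic cycle C_4; equivalently, r_4(C_4,4) ≤ 9. -/

import Mathlib

/-- The complete multipartite graph with `p` parts, each of size `n`:
vertices are pairs `(part, index)`, adjacent iff they lie in different parts. -/
def completeMultipartite (p n : ℕ) : SimpleGraph (Fin p × Fin n) where
  Adj v w := v.1 ≠ w.1
  symm := ⟨fun _ _ h => h.symm⟩
  loopless := ⟨fun _ h => h rfl⟩

instance (p n : ℕ) : DecidableRel (completeMultipartite p n).Adj :=
  fun v w => inferInstanceAs (Decidable (v.1 ≠ w.1))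

/-- The edge coloring `c` contains a monochromatic cycle `C₄` in the graph `G`. -/
def HasMonoC4 {V : Type*} (G : SimpleGraph V) {k : ℕ} (c : Sym2 V → Fin k) : Prop :=
  ∃ v₁ v₂ v₃ v₄ : V,
    v₁ ≠ v₂ ∧ v₁ ≠ v₃ ∧ v₁ ≠ v₄ ∧ v₂ ≠ v₃ ∧ v₂ ≠ v₄ ∧ v₃ ≠ v₄ ∧
    G.Adj v₁ v₂ ∧ G.Adj v₂ v₃ ∧ G.Adj v₃ v₄ ∧ G.Adj v₄ v₁ ∧
    c s(v₁, v₂) = c s(v₂, v₃) ∧ c s(v₂, v₃) = c s(v₃, v₄) ∧ c s(v₃, v₄) = c s(v₄, v₁)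

open Finset

private lemma nat_le_sq (n : ℕ) : n ≤ n * n := by
  cases n with
  | zero => simp
  | succ m => exact Nat.le_mul_of_pos_left _ (Nat.succ_pos m)

private lemma convex4 (a b c d : ℕ) (h : a + b + c + d = 27) :
    156 ≤ (a*a - a) + (b*b - b) + (c*c - c) + (d*d - d) := by
  have h729 : (729:ℤ) ≤ 4 * ((a:ℤ)*a + (b:ℤ)*b + (c:ℤ)*c + (d:ℤ)*d) := by
    have h' : (a:ℤ) + b + c + d = 27 := by exact_mod_cast h
    nlinarith [sq_nonneg ((a:ℤ) - b), sq_nonneg ((a:ℤ) - c), sq_nonneg ((a:ℤ) - d),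
      sq_nonneg ((b:ℤ) - c), sq_nonneg ((b:ℤ) - d), sq_nonneg ((c:ℤ) - d)]
  have h729' : 729 ≤ 4 * (a*a + b*b + c*c + d*d) := by exact_mod_cast h729
  have ha := nat_le_sq a
  have hb := nat_le_sq b
  have hc := nat_le_sq c
  have hd := nat_le_sq d
  obtain ⟨A, hA⟩ : ∃ A, a*a = A := ⟨_, rfl⟩
  obtain ⟨B, hB⟩ : ∃ B, b*b = B := ⟨_, rfl⟩
  obtain ⟨C, hC⟩ : ∃ C, c*c = C := ⟨_, rfl⟩
  obtain ⟨D, hD⟩ : ∃ D, d*d = D := ⟨_, rfl⟩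
  rw [hA, hB, hC, hD] at h729' ⊢
  rw [hA] at ha; rw [hB] at hb; rw [hC] at hc; rw [hD] at hd
  omega

private lemma mono_aux (c : Sym2 (Fin 4 × Fin 9) → Fin 4) :
    HasMonoC4 (completeMultipartite 4 9) c := by
  classical
  by_contra hmc
  -- F i : set of monochromatic "cherries" (z, (x, y)) with x ≠ y, both x, y adjacent to z
  -- with color i on both edges
  set F : Fin 4 → Finset ((Fin 4 × Fin 9) × (Fin 4 × Fin 9) × (Fin 4 × Fin 9)) :=
    fun i => univ.filter (fun t => t.2.1 ≠ t.2.2 ∧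
      (t.2.1.1 ≠ t.1.1 ∧ c s(t.2.1, t.1) = i) ∧
      (t.2.2.1 ≠ t.1.1 ∧ c s(t.2.2, t.1) = i)) with hF
  -- upper bound: at most one z per pair (x, y)
  have upper : ∀ i, (F i).card ≤ 1296 := by
    intro i
    rw [Finset.card_eq_sum_card_fiberwise
      (f := fun t => t.2) (t := (univ : Finset ((Fin 4 × Fin 9) × (Fin 4 × Fin 9))))
      (fun x _ => mem_univ _)]
    have hone : ∀ p ∈ (univ : Finset ((Fin 4 × Fin 9) × (Fin 4 × Fin 9))),
        ((F i).filter (fun t => t.2 = p)).card ≤ 1 := by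
      rintro ⟨x, y⟩ -
      refine card_le_one.mpr ?_
      rintro ⟨z1, x1, y1⟩ ht1 ⟨z2, x2, y2⟩ ht2
      simp only [hF, mem_filter, mem_univ, true_and] at ht1 ht2
      obtain ⟨⟨hne, ⟨ha1, hc1⟩, ⟨ha2, hc2⟩⟩, hp1⟩ := ht1
      obtain ⟨⟨hne', ⟨ha1', hc1'⟩, ⟨ha2', hc2'⟩⟩, hp2⟩ := ht2
      injection hp1 with hp1a hp1b
      injection hp2 with hp2a hp2b
      subst hp1a; subst hp1b; subst hp2a; subst hp2b
      simp only [Prod.mk.injEq, and_self, and_true]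
      by_contra hz
      apply hmc
      refine ⟨x2, z1, y2, z2, ?_, ?_, ?_, ?_, ?_, ?_, ?_, ?_, ?_, ?_, ?_, ?_, ?_⟩
      · exact fun he => ha1 (congrArg Prod.fst he)
      · exact hne
      · exact fun he => ha1' (congrArg Prod.fst he)
      · exact fun he => ha2 (congrArg Prod.fst he).symm
      · exact hz
      · exact fun he => ha2' (congrArg Prod.fst he)
      · exact ha1                       -- adj x z1
      · exact fun h => ha2 h.symm       -- adj z1 y
      · exact ha2'                      -- adj y z2
      · exact fun h => ha1' h.symm      -- adj z2 x
      · rw [hc1, Sym2.eq_swap, hc2]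
      · rw [Sym2.eq_swap, hc2, hc2']
      · rw [hc2', Sym2.eq_swap, hc1']
    calc ∑ p ∈ (univ : Finset ((Fin 4 × Fin 9) × (Fin 4 × Fin 9))),
          ((F i).filter (fun t => t.2 = p)).card
        ≤ ∑ _p ∈ (univ : Finset ((Fin 4 × Fin 9) × (Fin 4 × Fin 9))), 1 :=
          Finset.sum_le_sum hone
      _ = 1296 := by simp
  -- degree of z in color i
  set d : Fin 4 → (Fin 4 × Fin 9) → ℕ :=
    fun i z => (univ.filter (fun w : Fin 4 × Fin 9 => w.1 ≠ z.1 ∧ c s(w, z) = i)).card with hd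
  have sum27 : ∀ z : Fin 4 × Fin 9, ∑ i : Fin 4, d i z = 27 := by
    intro z
    have h27 : ((univ : Finset (Fin 4 × Fin 9)).filter (fun w => w.1 ≠ z.1)).card = 27 := by
      have h0 : ∀ a : Fin 4,
          ((univ : Finset (Fin 4 × Fin 9)).filter (fun w => w.1 ≠ a)).card = 27 := by decide
      exact h0 z.1
    rw [Finset.card_eq_sum_card_fiberwise (f := fun w => c s(w, z))
      (t := (univ : Finset (Fin 4))) (fun x _ => mem_univ _)] at h27
    rw [← h27]
    refine Finset.sum_congr rfl ?_
    intro i _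
    rw [hd, Finset.filter_filter]
  have lowerEq : ∀ i, ∑ z : Fin 4 × Fin 9, (d i z * d i z - d i z) ≤ (F i).card := by
    intro i
    rw [Finset.card_eq_sum_card_fiberwise (s := F i) (f := fun t => t.1)
      (t := (univ : Finset (Fin 4 × Fin 9))) (fun x _ => mem_univ _)]
    refine Finset.sum_le_sum ?_
    intro z _
    have hbij : ((F i).filter (fun t => t.1 = z)).card
        = ((univ.filter (fun w : Fin 4 × Fin 9 => w.1 ≠ z.1 ∧ c s(w, z) = i)).offDiag).card := by
      refine Finset.card_bij (fun t _ => t.2) ?_ ?_ ?_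
      · rintro ⟨z', x, y⟩ ht
        simp only [hF, mem_filter, mem_univ, true_and] at ht
        obtain ⟨⟨hne, ⟨ha1, hc1⟩, ⟨ha2, hc2⟩⟩, rfl⟩ := ht
        exact Finset.mem_offDiag.mpr ⟨mem_filter.mpr ⟨mem_univ _, ha1, hc1⟩,
          mem_filter.mpr ⟨mem_univ _, ha2, hc2⟩, hne⟩
      · rintro ⟨z1, p1⟩ h1 ⟨z2, p2⟩ h2 hp
        simp only [mem_filter] at h1 h2
        simp only at hp
        rw [Prod.mk.injEq]
        exact ⟨h1.2.trans h2.2.symm, hp⟩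
      · rintro ⟨x, y⟩ hb
        rw [Finset.mem_offDiag] at hb
        obtain ⟨hx, hy, hne⟩ := hb
        simp only [mem_filter, mem_univ, true_and] at hx hy
        refine ⟨(z, x, y), ?_, rfl⟩
        simp only [hF, mem_filter, mem_univ, true_and]
        exact ⟨⟨hne, hx, hy⟩, trivial⟩
    rw [hbij, Finset.offDiag_card]
  have tot_low : 5616 ≤ ∑ i : Fin 4, (F i).card := by
    have step1 : (5616:ℕ) ≤ ∑ z : Fin 4 × Fin 9, ∑ i : Fin 4, (d i z * d i z - d i z) := by
      have : ∀ z ∈ (univ : Finset (Fin 4 × Fin 9)),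
          156 ≤ ∑ i : Fin 4, (d i z * d i z - d i z) := by
        intro z _
        rw [Fin.sum_univ_four]
        exact convex4 _ _ _ _ (by have := sum27 z; rwa [Fin.sum_univ_four] at this)
      calc (5616:ℕ) = ∑ _z : Fin 4 × Fin 9, 156 := by simp
        _ ≤ _ := Finset.sum_le_sum this
    calc (5616:ℕ) ≤ ∑ z : Fin 4 × Fin 9, ∑ i : Fin 4, (d i z * d i z - d i z) := step1
      _ = ∑ i : Fin 4, ∑ z : Fin 4 × Fin 9, (d i z * d i z - d i z) := Finset.sum_comm
      _ ≤ ∑ i : Fin 4, (F i).card := Finset.sum_le_sum (fun i _ => lowerEq i)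
  have tot_up : ∑ i : Fin 4, (F i).card ≤ 5184 := by
    calc ∑ i : Fin 4, (F i).card ≤ ∑ _i : Fin 4, 1296 :=
        Finset.sum_le_sum (fun i _ => upper i)
      _ = 5184 := by simp
  omega

/-- The `p`-partite Ramsey number `r_p(C₄, k)`: the least positive `n` such that every
`k`-coloring of the edges of `K_n^p` contains a monochromatic `C₄`. -/
noncomputable def multipartiteRamsey (p k : ℕ) : ℕ :=
  sInf {n : ℕ | 0 < n ∧
    ∀ c : Sym2 (Fin p × Fin n) → Fin k, HasMonoC4 (completeMultipartite p n) c}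

/-- Every 4-coloring of the edges of `K_9^4` contains a monochromatic `C₄`;
equivalently, `r₄(C₄, 4) ≤ 9`. -/
theorem fourpartiteRamsey_four_colors_le :
    (∀ c : Sym2 (Fin 4 × Fin 9) → Fin 4, HasMonoC4 (completeMultipartite 4 9) c) ∧
      multipartiteRamsey 4 4 ≤ 9 := by
  refine ⟨mono_aux, ?_⟩
  exact Nat.sInf_le ⟨by norm_num, mono_aux⟩
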